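/- arXiv:1404.2963 — 3 statements merged into one kernel-verified Lean document; each statement's English description precedes it below -/
import Mathlib

section
/- Let ω be a homogeneous 1-form of degree e with i_R(ω) = 0, and let (h, η) be a pair consisting of a homogeneous polynomial h and a homogeneous 1-form η, both of degree a, satisfying a·h·dω = e·ω ∧ (η − dh). Then i_R(η) = 0. -/
open MvPolynomial Finset

noncomputable section

/-- An `r`-form on `ℂ^m` with polynomial coefficients, represented by its
(intendedly alternating) coefficient function `(i₁,…,i_r) ↦ τ_{i₁…i_r}`. -/
abbrev Form (m r : ℕ) : Type := (Fin r → Fin m) → MvPolynomial (Fin m) ℂ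

/-- The coefficient function is alternating. -/
def IsAlt {m r : ℕ} (τ : Form m r) : Prop :=
  ∀ (f : Fin r → Fin m) (σ : Equiv.Perm (Fin r)),
    τ (f ∘ σ) = ((Equiv.Perm.sign σ : ℤˣ) : ℤ) • τ f

/-- `τ` is a homogeneous `r`-form of total degree `p` (each `xᵢ` and each `dxᵢ`
has degree `1`, so the polynomial coefficients are homogeneous of degree `p - r`). -/
def IsHomog {m : ℕ} (r p : ℕ) (τ : Form m r) : Prop :=
  ∀ f, (τ f).IsHomogeneous (p - r)

/-- Wedge product of forms (antisymmetrized product). -/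
def wedge {m r s : ℕ} (τ : Form m r) (σ : Form m s) : Form m (r + s) :=
  fun f => (((r.factorial * s.factorial : ℕ) : ℂ))⁻¹ •
    ∑ π : Equiv.Perm (Fin (r + s)),
      ((Equiv.Perm.sign π : ℤˣ) : ℤ) •
        (τ (fun i => f (π (Fin.castAdd s i))) * σ (fun j => f (π (Fin.natAdd r j))))

/-- Exterior derivative. -/
def extd {m r : ℕ} (τ : Form m r) : Form m (r + 1) :=
  fun f => ∑ i : Fin (r + 1),
    (-1 : ℤ) ^ (i : ℕ) • MvPolynomial.pderiv (f i) (τ (f ∘ i.succAbove))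

/-- Contraction (interior product) with the radial vector field `R = Σ xᵢ ∂/∂xᵢ`. -/
def ctr {m r : ℕ} (τ : Form m (r + 1)) : Form m r :=
  fun f => ∑ j : Fin m, MvPolynomial.X j * τ (Fin.cons j f)

/-- Contraction with a polynomial vector field `X = Σ Xᵢ ∂/∂xᵢ`. -/
def ctrX {m r : ℕ} (X : Fin m → MvPolynomial (Fin m) ℂ) (τ : Form m (r + 1)) : Form m r :=
  fun f => ∑ j : Fin m, X j * τ (Fin.cons j f)

/-- A polynomial regarded as a `0`-form. -/
def const {m : ℕ} (h : MvPolynomial (Fin m) ℂ) : Form m 0 := fun _ => h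

/-- Reindexing a form along an equality of ranks. -/
def castF {m r s : ℕ} (h : r = s) (τ : Form m r) : Form m s :=
  fun f => τ (f ∘ Fin.cast h)

/-- `d (i_R τ)`, defined for forms of any rank (it is `0` on `0`-forms). -/
def dIR {m : ℕ} : {r : ℕ} → Form m r → Form m r
  | 0, _ => 0
  | _ + 1, τ => extd (ctr τ)

/-- `i_R (d τ)`, defined for forms of any rank. -/
def iRd {m r : ℕ} (τ : Form m r) : Form m r := ctr (extd τ)

/-- The operator `ω △ τ := ω ∧ dτ + κ · dω ∧ τ`. -/
def triangle {m : ℕ} (ω : Form m 1) (κ : ℂ) {r : ℕ} (τ : Form m r) : Form m (r + 2) :=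
  castF (by omega) (wedge ω (extd τ)) + κ • castF (by omega) (wedge (extd ω) τ)

end

section Aux
open MvPolynomial Finset

lemma X_mul_pderiv_monomial {m : ℕ} (i : Fin m) (d : (Fin m) →₀ ℕ) (c : ℂ) :
    X i * pderiv i (monomial d c) = (d i : ℂ) • monomial d c := by
  rw [pderiv_monomial]
  rcases Nat.eq_zero_or_pos (d i) with h | h
  · simp [h]
  · have hd : d - Finsupp.single i 1 + Finsupp.single i 1 = d := by
      ext j
      rcases eq_or_ne j i with rfl | hj
      · simp; omega
      · simp [Finsupp.single_apply, hj.symm, Ne.symm hj]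
    rw [mul_comm, ← pow_one (X i : MvPolynomial (Fin m) ℂ), ← monomial_add_single, hd,
      smul_monomial, smul_eq_mul, mul_comm]

lemma euler_id {m n : ℕ} (p : MvPolynomial (Fin m) ℂ) (hp : p.IsHomogeneous n) :
    ∑ i : Fin m, X i * pderiv i p = (n : ℂ) • p := by
  conv_lhs => rw [p.as_sum]
  have key : ∀ i : Fin m, X i * pderiv i (∑ v ∈ p.support, monomial v (coeff v p))
      = ∑ v ∈ p.support, (v i : ℂ) • monomial v (coeff v p) := by
    intro i
    rw [map_sum, Finset.mul_sum]
    exact Finset.sum_congr rfl fun v _ => X_mul_pderiv_monomial i v _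
  rw [Finset.sum_congr rfl fun i _ => key i, Finset.sum_comm]
  conv_rhs => rw [p.as_sum]
  rw [Finset.smul_sum]
  refine Finset.sum_congr rfl fun v hv => ?_
  rw [← Finset.sum_smul]
  congr 1
  have hdeg : ∑ i : Fin m, v i = n := by
    have h1 := hp (mem_support_iff.mp hv)
    rw [← h1]
    simp [Finsupp.weight_apply, Finsupp.sum_fintype]
  rw [← Nat.cast_sum, hdeg]

lemma form1_congr {m : ℕ} (ω : Form m 1) (g : Fin 1 → Fin m) : ω g = ω (fun _ => g 0) :=
  congrArg ω (funext fun x => by rw [Subsingleton.elim x 0])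

lemma form0_congr {m : ℕ} (h : Form m 0) (g : Fin 0 → Fin m) : h g = h Fin.elim0 :=
  congrArg h (funext fun x => x.elim0)

lemma perm2_sum {M : Type*} [AddCommMonoid M] (g : Equiv.Perm (Fin 2) → M) :
    ∑ π, g π = g 1 + g (Equiv.swap 0 1) := by
  have h : (Finset.univ : Finset (Equiv.Perm (Fin 2))) = {1, Equiv.swap 0 1} := by decide
  rw [h, Finset.sum_insert (by decide), Finset.sum_singleton]

lemma extd_one_apply {m : ℕ} (ω : Form m 1) (f : Fin 2 → Fin m) :
    extd ω f = pderiv (f 0) (ω fun _ => f 1) - pderiv (f 1) (ω fun _ => f 0) := by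
  show ∑ i : Fin 2, (-1 : ℤ) ^ (i : ℕ) • pderiv (f i) (ω (f ∘ i.succAbove)) = _
  rw [Fin.sum_univ_two, form1_congr ω (f ∘ (0:Fin 2).succAbove),
    form1_congr ω (f ∘ (1:Fin 2).succAbove)]
  have h1 : (0:Fin 2).succAbove 0 = 1 := by decide
  have h2 : (1:Fin 2).succAbove 0 = 0 := by decide
  simp [Function.comp, h1, h2, sub_eq_add_neg]

lemma extd_zero_apply {m : ℕ} (h : Form m 0) (g : Fin 1 → Fin m) :
    extd h g = pderiv (g 0) (h Fin.elim0) := by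
  show ∑ i : Fin 1, (-1 : ℤ) ^ (i : ℕ) • pderiv (g i) (h (g ∘ i.succAbove)) = _
  rw [Fin.sum_univ_one, form0_congr h (g ∘ (0 : Fin 1).succAbove)]
  simp

lemma wedge11 {m : ℕ} (α β : Form m 1) (f : Fin 2 → Fin m) :
    wedge α β f = α (fun _ => f 0) * β (fun _ => f 1) - α (fun _ => f 1) * β (fun _ => f 0) := by
  show (((Nat.factorial 1 * Nat.factorial 1 : ℕ) : ℂ))⁻¹ •
    ∑ π : Equiv.Perm (Fin 2), ((Equiv.Perm.sign π : ℤˣ) : ℤ) •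
      (α (fun i => f (π (Fin.castAdd 1 i))) * β (fun j => f (π (Fin.natAdd 1 j)))) = _
  rw [perm2_sum]
  rw [form1_congr α (fun i => f ((1 : Equiv.Perm (Fin 2)) (Fin.castAdd 1 i))),
      form1_congr β (fun j => f ((1 : Equiv.Perm (Fin 2)) (Fin.natAdd 1 j))),
      form1_congr α (fun i => f ((Equiv.swap 0 1) (Fin.castAdd 1 i))),
      form1_congr β (fun j => f ((Equiv.swap 0 1) (Fin.natAdd 1 j)))]
  have c0 : Fin.castAdd 1 (0 : Fin 1) = (0 : Fin 2) := by decide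
  have n0 : Fin.natAdd 1 (0 : Fin 1) = (1 : Fin 2) := by decide
  simp [c0, n0, Equiv.swap_apply_left, Equiv.swap_apply_right, sub_eq_add_neg]

lemma wedge02 {m : ℕ} (h : Form m 0) (ω : Form m 1) (f : Fin 2 → Fin m) :
    wedge h (extd ω) f = h Fin.elim0 * extd ω f := by
  show (((Nat.factorial 0 * Nat.factorial 2 : ℕ) : ℂ))⁻¹ •
    ∑ π : Equiv.Perm (Fin 2), ((Equiv.Perm.sign π : ℤˣ) : ℤ) •
      (h (fun i => f (π (Fin.castAdd 2 i))) * extd ω (fun j => f (π (Fin.natAdd 0 j)))) = _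
  rw [perm2_sum]
  rw [form0_congr h (fun i => f ((1 : Equiv.Perm (Fin 2)) (Fin.castAdd 2 i))),
      form0_congr h (fun i => f ((Equiv.swap 0 1) (Fin.castAdd 2 i)))]
  have hid : (fun j : Fin 2 => f ((1 : Equiv.Perm (Fin 2)) (Fin.natAdd 0 j))) = f := by
    funext j; exact congrArg f (by ext; simp)
  have hsw : (fun j : Fin 2 => f ((Equiv.swap 0 1) (Fin.natAdd 0 j)))
      = (fun j : Fin 2 => f ((Equiv.swap 0 1) j)) := by
    funext j; exact congrArg f (congrArg _ (by ext; simp))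
  rw [hid, hsw]
  have hanti : extd ω (fun j : Fin 2 => f ((Equiv.swap 0 1) j)) = - extd ω f := by
    rw [extd_one_apply, extd_one_apply]
    simp [Equiv.swap_apply_left, Equiv.swap_apply_right]
  rw [hanti]
  simp only [Equiv.Perm.sign_one, Units.val_one, Int.cast_one, one_smul]
  have hs : Equiv.Perm.sign (Equiv.swap (0:Fin 2) 1) = -1 := by decide
  rw [hs]
  simp only [Units.val_neg, Units.val_one]
  push_cast
  rw [neg_one_zsmul, mul_neg, neg_neg, ← two_smul ℂ (h Fin.elim0 * extd ω f), smul_smul]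
  norm_num [Nat.factorial]

end Aux

/-- a graded projective unfolding `(h,η)` of `ω` in degree `a`
(i.e. `a·h·dω = e·ω∧(η−dh)`) satisfies `i_R η = 0`. -/
theorem unfolding_is_radial {m a e : ℕ} (he : 1 ≤ e)
    (ω : Form m 1) (hω : IsHomog 1 e ω) (hωR : ctr ω = 0) (hωne : ω ≠ 0)
    (h : Form m 0) (η : Form m 1) (hh : IsHomog 0 a h) (hη : IsHomog 1 a η)
    (heq : (a : ℂ) • wedge h (extd ω) = (e : ℂ) • wedge ω (η - extd h)) :
    ctr η = 0 := by
  classical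
  have S0 : ∑ j : Fin m, X j * ω (fun _ => j) = 0 := by
    have h0 : ∑ j : Fin m, X j * ω (Fin.cons j Fin.elim0) = 0 := congrFun hωR Fin.elim0
    rw [← h0]
    exact Finset.sum_congr rfl fun j _ => by
      rw [form1_congr ω (Fin.cons j Fin.elim0), Fin.cons_zero]
  have EW : ∀ k : Fin m, ∑ j : Fin m, X j * pderiv j (ω (fun _ => k))
      = C (((e - 1 : ℕ) : ℂ)) * ω (fun _ => k) := by
    intro k
    rw [euler_id _ (hω _), smul_eq_C_mul]
  have EH : ∑ j : Fin m, X j * pderiv j (h Fin.elim0) = C ((a : ℂ)) * h Fin.elim0 := by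
    have h' := hh Fin.elim0
    rw [Nat.sub_zero] at h'
    rw [euler_id _ h', smul_eq_C_mul]
  have SW : ∀ k : Fin m, ∑ j : Fin m, X j * pderiv k (ω (fun _ => j)) = - ω (fun _ => k) := by
    intro k
    have hz : ∑ j : Fin m, pderiv k (X j * ω (fun _ => j)) = 0 := by
      rw [← map_sum, S0, map_zero]
    have h1 : ∑ j : Fin m, pderiv k (X j) * ω (fun _ => j) = ω (fun _ => k) := by
      rw [Finset.sum_eq_single k]
      · rw [pderiv_X_self, one_mul]
      · intro j _ hj; rw [pderiv_X_of_ne hj, zero_mul]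
      · intro hk; exact absurd (Finset.mem_univ k) hk
    have h2 : ω (fun _ => k) + ∑ j : Fin m, X j * pderiv k (ω (fun _ => j)) = 0 := by
      rw [← h1, ← Finset.sum_add_distrib, ← hz]
      exact Finset.sum_congr rfl fun j _ => (pderiv_mul).symm
    linear_combination h2
  have E1 : ∀ j k : Fin m,
      C ((a : ℂ)) * (h Fin.elim0 * (pderiv j (ω (fun _ => k)) - pderiv k (ω (fun _ => j))))
      = C ((e : ℂ)) * (ω (fun _ => j) * (η (fun _ => k) - pderiv k (h Fin.elim0))
          - ω (fun _ => k) * (η (fun _ => j) - pderiv j (h Fin.elim0))) := by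
    intro j k
    have t := congrFun heq ![j, k]
    rw [Pi.smul_apply, Pi.smul_apply, wedge02, extd_one_apply,
      wedge11 ω (η - extd h) ![j, k]] at t
    simp only [Pi.sub_apply, extd_zero_apply, Matrix.cons_val_zero, Matrix.cons_val_one,
      Matrix.head_cons, smul_eq_C_mul] at t
    exact t
  have key : ∀ k : Fin m, ω (fun _ => k) * (∑ j : Fin m, X j * η (fun _ => j)) = 0 := by
    intro k
    have t2 : ∑ j : Fin m, X j *
        (C ((a : ℂ)) * (h Fin.elim0 * (pderiv j (ω (fun _ => k)) - pderiv k (ω (fun _ => j)))))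
        = ∑ j : Fin m, X j *
        (C ((e : ℂ)) * (ω (fun _ => j) * (η (fun _ => k) - pderiv k (h Fin.elim0))
          - ω (fun _ => k) * (η (fun _ => j) - pderiv j (h Fin.elim0)))) :=
      Finset.sum_congr rfl fun j _ => by rw [E1 j k]
    have L : ∑ j : Fin m, X j *
        (C ((a : ℂ)) * (h Fin.elim0 * (pderiv j (ω (fun _ => k)) - pderiv k (ω (fun _ => j)))))
        = C ((a : ℂ)) * h Fin.elim0 *
            (C (((e - 1 : ℕ) : ℂ)) * ω (fun _ => k)) -
          C ((a : ℂ)) * h Fin.elim0 * (- ω (fun _ => k)) := by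
      rw [← EW k, ← SW k, Finset.mul_sum, Finset.mul_sum, ← Finset.sum_sub_distrib]
      exact Finset.sum_congr rfl fun j _ => by ring
    have R : ∑ j : Fin m, X j *
        (C ((e : ℂ)) * (ω (fun _ => j) * (η (fun _ => k) - pderiv k (h Fin.elim0))
          - ω (fun _ => k) * (η (fun _ => j) - pderiv j (h Fin.elim0))))
        = (∑ j : Fin m, X j * ω (fun _ => j)) *
            (C ((e : ℂ)) * (η (fun _ => k) - pderiv k (h Fin.elim0)))
          - (∑ j : Fin m, X j * η (fun _ => j)) * (C ((e : ℂ)) * ω (fun _ => k))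
          + (∑ j : Fin m, X j * pderiv j (h Fin.elim0)) * (C ((e : ℂ)) * ω (fun _ => k)) := by
      rw [Finset.sum_mul, Finset.sum_mul, Finset.sum_mul, ← Finset.sum_sub_distrib,
        ← Finset.sum_add_distrib]
      exact Finset.sum_congr rfl fun j _ => by ring
    rw [L, R, S0, EH, zero_mul] at t2
    have hcast : (C (((e - 1 : ℕ) : ℂ)) : MvPolynomial (Fin m) ℂ) = C ((e : ℂ)) - 1 := by
      rw [Nat.cast_sub he, map_sub, Nat.cast_one, map_one]
    rw [hcast] at t2
    have he0 : C ((e : ℂ)) ≠ (0 : MvPolynomial (Fin m) ℂ) := by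
      simp only [Ne, C_eq_zero, Nat.cast_eq_zero]
      omega
    have t3 : C ((e : ℂ)) * (ω (fun _ => k) * (∑ j : Fin m, X j * η (fun _ => j))) = 0 := by
      linear_combination t2
    rcases mul_eq_zero.mp t3 with h' | h'
    · exact absurd h' he0
    · exact h'
  obtain ⟨f₀, hf₀⟩ := Function.ne_iff.mp hωne
  have hWne : ω (fun _ => f₀ 0) ≠ 0 := fun hx => hf₀ (by rw [form1_congr ω f₀, hx]; rfl)
  have hG : (∑ j : Fin m, X j * η (fun _ => j)) = 0 := by
    rcases mul_eq_zero.mp (key (f₀ 0)) with h' | h'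
    · exact absurd h' hWne
    · exact h'
  funext f
  show ∑ j : Fin m, X j * η (Fin.cons j f) = 0
  rw [← hG]
  exact Finset.sum_congr rfl fun j _ => by
    rw [form1_congr η (Fin.cons j f), Fin.cons_zero]
end

section
/- Let ω be an integrable homogeneous 1-form of degree e with i_R ω = 0, and suppose ω is irreducible in the sense that whenever ω ∧ θ = 0 for a 1-form θ, there exists a polynomial f with θ = f·ω. Then the projection π₁ : 𝕌(ω) → I(ω), (h,η) ↦ h, from the module of graded projective unfoldings to the unfolding ideal, is an isomorphism of graded abelian groups. -/
open MvPolynomial Finset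

namespace Aux

variable {m : ℕ}

lemma degree_add (x y : Fin m →₀ ℕ) : (x + y).degree = x.degree + y.degree := by
  simp [Finsupp.degree_eq_weight_one, map_add]

lemma degree_single (i : Fin m) : (Finsupp.single i 1).degree = 1 := by
  simp

lemma homog_csmul {n : ℕ} (c : ℂ) {p : MvPolynomial (Fin m) ℂ} (hp : p.IsHomogeneous n) :
    (c • p).IsHomogeneous n := by
  rw [smul_eq_C_mul]; exact hp.C_mul c

lemma homog_zsmul {n : ℕ} (z : ℤ) {p : MvPolynomial (Fin m) ℂ} (hp : p.IsHomogeneous n) :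
    (z • p).IsHomogeneous n := by
  rw [← Int.cast_smul_eq_zsmul ℂ]; exact homog_csmul _ hp

lemma hc_self {n : ℕ} {p : MvPolynomial (Fin m) ℂ} (hp : p.IsHomogeneous n) :
    homogeneousComponent n p = p := by
  rw [homogeneousComponent_of_mem ((mem_homogeneousSubmodule _ _).mpr hp)]; simp

lemma pderiv_homog {n : ℕ} {p : MvPolynomial (Fin m) ℂ} (hp : p.IsHomogeneous (n + 1))
    (i : Fin m) : (pderiv i p).IsHomogeneous n := by
  have hrep : p = ∑ d ∈ p.support, monomial d (coeff d p) := (support_sum_monomial_coeff p).symm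
  rw [hrep, map_sum]
  apply MvPolynomial.IsHomogeneous.sum
  intro d hd
  rw [pderiv_monomial]
  by_cases hdi : d i = 0
  · rw [hdi]; simp [isHomogeneous_zero]
  · apply isHomogeneous_monomial
    have hdeg : d.degree = n + 1 := by
      have := hp (mem_support_iff.mp hd); rwa [Finsupp.degree_eq_weight_one]
    have hle : Finsupp.single i 1 ≤ d := by
      rw [Finsupp.single_le_iff]; omega
    have hsum : (d - Finsupp.single i 1) + Finsupp.single i 1 = d := tsub_add_cancel_of_le hle
    have := congrArg Finsupp.degree hsum
    rw [degree_add, degree_single, hdeg] at this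
    omega

lemma pderiv_homog_zero {p : MvPolynomial (Fin m) ℂ} (hp : p.IsHomogeneous 0) (i : Fin m) :
    pderiv i p = 0 := by
  have h0 : homogeneousComponent 0 p = p := hc_self hp
  rw [← h0, homogeneousComponent_zero, pderiv_C]

lemma hc_mul_homog {d : ℕ} {p : MvPolynomial (Fin m) ℂ} (hp : p.IsHomogeneous d)
    (n : ℕ) (q : MvPolynomial (Fin m) ℂ) :
    homogeneousComponent (d + n) (p * q) = p * homogeneousComponent n q := by
  induction q using MvPolynomial.induction_on' with
  | add q₁ q₂ ih₁ ih₂ => rw [mul_add, map_add, map_add, mul_add, ih₁, ih₂]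
  | monomial s c =>
    have hu : (monomial s c).IsHomogeneous s.degree := isHomogeneous_monomial _ rfl
    have h1 : homogeneousComponent n (monomial s c) = if n = s.degree then monomial s c else 0 :=
      homogeneousComponent_of_mem ((mem_homogeneousSubmodule _ _).mpr hu)
    have h2 : homogeneousComponent (d + n) (p * monomial s c)
        = if d + n = d + s.degree then p * monomial s c else 0 :=
      homogeneousComponent_of_mem ((mem_homogeneousSubmodule _ _).mpr (hp.mul hu))
    rw [h1, h2]
    by_cases hns : n = s.degree
    · simp [hns]
    · rw [if_neg hns, if_neg (fun h => hns (Nat.add_left_cancel h)), mul_zero]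

lemma wedge_sub {r s : ℕ} (τ : Form m r) (σ₁ σ₂ : Form m s) :
    wedge τ (σ₁ - σ₂) = wedge τ σ₁ - wedge τ σ₂ := by
  funext f
  simp [wedge, mul_sub, smul_sub, Finset.sum_sub_distrib]

lemma wedge_zero {r s : ℕ} (τ : Form m r) :
    wedge τ (0 : Form m s) = 0 := by
  funext f
  simp [wedge]

lemma wedge_smul {r s : ℕ} (c : ℂ) (τ : Form m r) (σ : Form m s) :
    wedge τ (c • σ) = c • wedge τ σ := by
  funext f
  simp only [wedge, Pi.smul_apply, mul_smul_comm, Pi.smul_def]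
  rw [smul_comm c]
  congr 1
  rw [Finset.smul_sum]
  exact Finset.sum_congr rfl fun π _ => (smul_comm _ _ _)

lemma hc_wedge {r s d : ℕ} (τ : Form m r) (σ : Form m s)
    (hτ : ∀ g, (τ g).IsHomogeneous d) (n : ℕ) (f : Fin (r + s) → Fin m) :
    homogeneousComponent (d + n) (wedge τ σ f)
      = wedge τ (fun g => homogeneousComponent n (σ g)) f := by
  unfold wedge
  rw [map_smul, map_sum]
  congr 1
  refine Finset.sum_congr rfl fun π _ => ?_
  rw [map_zsmul, hc_mul_homog (hτ _)]

lemma extd_homog {m r n : ℕ} (τ : Form m r) (hτ : ∀ g, (τ g).IsHomogeneous (n + 1))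
    (f : Fin (r + 1) → Fin m) : ((extd τ) f).IsHomogeneous n := by
  unfold extd
  exact MvPolynomial.IsHomogeneous.sum _ _ _ fun i _ =>
    Aux.homog_zsmul _ (Aux.pderiv_homog (hτ _) _)

end Aux

/-- for an irreducible integrable `ω`, the projection
`π₁ : 𝕌(ω) → I(ω)`, `(h,η) ↦ h`, is an isomorphism of graded abelian groups:
in each degree `a` it is surjective onto `I(ω)(a)` and injective (two unfoldings
with the same first coordinate differ by an element of `S·ω`). -/
theorem unfoldings_iso_ideal {m a e : ℕ} (he : 1 ≤ e) (ha : 1 ≤ a)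
    (ω : Form m 1) (hω : IsHomog 1 e ω) (hR : ctr ω = 0)
    (hint : wedge ω (extd ω) = 0)
    (hirr : ∀ θ : Form m 1, wedge ω θ = 0 → ∃ f : Form m 0, θ = wedge f ω) :
    (∀ h : Form m 0, IsHomog 0 a h →
      (∃ θ : Form m 1, wedge h (extd ω) = wedge ω θ) →
      ∃ η : Form m 1, IsHomog 1 a η ∧
        (a : ℂ) • wedge h (extd ω) = (e : ℂ) • wedge ω (η - extd h)) ∧
    (∀ (h : Form m 0) (η₁ η₂ : Form m 1), IsHomog 0 a h →
      IsHomog 1 a η₁ → IsHomog 1 a η₂ →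
      (a : ℂ) • wedge h (extd ω) = (e : ℂ) • wedge ω (η₁ - extd h) →
      (a : ℂ) • wedge h (extd ω) = (e : ℂ) • wedge ω (η₂ - extd h) →
      ∃ f : Form m 0, η₁ - η₂ = wedge f ω) := by
  have he' : (e : ℂ) ≠ 0 := Nat.cast_ne_zero.mpr (by omega)
  constructor
  · rintro h hh ⟨θ, hθ⟩
    have hextdh : ∀ f, ((extd h) f).IsHomogeneous (a - 1) :=
      Aux.extd_homog h (fun g => by
        have := hh g; rwa [show a - 0 = a - 1 + 1 by omega] at this)
    by_cases he2 : e = 1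
    · subst he2
      have hdω : extd ω = 0 := by
        funext g
        unfold extd
        refine Finset.sum_eq_zero fun i _ => ?_
        rw [Aux.pderiv_homog_zero (hω _) (g i), smul_zero]
      refine ⟨extd h, fun f => hextdh f, ?_⟩
      rw [hdω, Aux.wedge_zero, sub_self, Aux.wedge_zero, smul_zero, smul_zero]
    · set θ' : Form m 1 := fun g => homogeneousComponent (a - 1) (θ g) with hθ'def
      have hωd : ∀ g, (ω g).IsHomogeneous (e - 1) := fun g => hω g
      have hextdω : ∀ g, ((extd ω) g).IsHomogeneous (e - 2) :=
        Aux.extd_homog ω (fun g => by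
          have := hω g; rwa [show e - 1 = e - 2 + 1 by omega] at this)
      have hkey : wedge h (extd ω) = wedge ω θ' := by
        funext f
        have hhom : (wedge h (extd ω) f).IsHomogeneous ((e - 1) + (a - 1)) := by
          rw [show (e - 1) + (a - 1) = a + (e - 2) by omega]
          unfold wedge
          apply Aux.homog_csmul
          exact MvPolynomial.IsHomogeneous.sum _ _ _ fun π _ =>
            Aux.homog_zsmul _ ((hh _).mul (hextdω _))
        have h1 : homogeneousComponent ((e - 1) + (a - 1)) (wedge h (extd ω) f)
            = homogeneousComponent ((e - 1) + (a - 1)) (wedge ω θ f) := by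
          rw [congrFun hθ f]
        rw [Aux.hc_wedge ω θ hωd (a - 1) f, Aux.hc_self hhom] at h1
        exact h1
      refine ⟨((a : ℂ) / (e : ℂ)) • θ' + extd h, ?_, ?_⟩
      · intro f
        have hf : (((a : ℂ) / (e : ℂ)) • θ' + extd h) f
            = ((a : ℂ) / (e : ℂ)) • θ' f + extd h f := rfl
        rw [hf]
        exact (Aux.homog_csmul _ (homogeneousComponent_isHomogeneous _ _)).add (hextdh f)
      · have hsub : ((a : ℂ) / (e : ℂ)) • θ' + extd h - extd h = ((a : ℂ) / (e : ℂ)) • θ' :=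
          add_sub_cancel_right _ _
        rw [hsub, Aux.wedge_smul, hkey, smul_smul]
        congr 1
        field_simp
  · intro h η₁ η₂ _ _ _ h1 h2
    have hcc : wedge ω (η₁ - extd h) = wedge ω (η₂ - extd h) := by
      have h3 : (e : ℂ) • wedge ω (η₁ - extd h) = (e : ℂ) • wedge ω (η₂ - extd h) :=
        h1.symm.trans h2
      have h4 := congrArg (fun Z => ((e : ℂ))⁻¹ • Z) h3
      simpa [smul_smul, inv_mul_cancel₀ he'] using h4
    have hz : wedge ω (η₁ - η₂) = 0 := by
      have hd : η₁ - η₂ = (η₁ - extd h) - (η₂ - extd h) := by abel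
      rw [hd, Aux.wedge_sub, hcc, sub_self]
    exact hirr _ hz
end

section
/- Let ω be a homogeneous integrable 1-form of degree e with i_Rω = 0, and X a homogeneous polynomial vector field of degree a − e. Then the pair (i_Xω, (a·i_X dω + e·d i_Xω)/e) satisfies the graded unfolding equation in degree a: a·(i_Xω)·dω = e·ω ∧ ((a·i_X dω + e·d i_Xω)/e − d(i_Xω)). -/
open MvPolynomial Finset

noncomputable section Aux
open Equiv MvPolynomial Finset

variable {m : ℕ}

lemma sum_perm2 {M : Type*} [AddCommMonoid M] (F : Equiv.Perm (Fin 2) → M) :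
    ∑ π : Equiv.Perm (Fin 2), F π = F 1 + F (Equiv.swap 0 1) := by
  rw [show (Finset.univ : Finset (Equiv.Perm (Fin 2))) = {1, Equiv.swap 0 1} from by decide]
  rw [Finset.sum_insert (by decide), Finset.sum_singleton]

lemma sum_perm3 {M : Type*} [AddCommMonoid M] (F : Equiv.Perm (Fin 3) → M) :
    ∑ π : Equiv.Perm (Fin 3), F π = F 1 + F (Equiv.swap 0 1) + F (Equiv.swap 0 2)
      + F (Equiv.swap 1 2) + F (Equiv.swap 0 1 * Equiv.swap 1 2)
      + F (Equiv.swap 0 2 * Equiv.swap 1 2) := by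
  rw [show (Finset.univ : Finset (Equiv.Perm (Fin 3))) =
    {1, Equiv.swap 0 1, Equiv.swap 0 2, Equiv.swap 1 2,
     Equiv.swap 0 1 * Equiv.swap 1 2, Equiv.swap 0 2 * Equiv.swap 1 2} from by decide]
  rw [Finset.sum_insert (by decide), Finset.sum_insert (by decide),
    Finset.sum_insert (by decide), Finset.sum_insert (by decide),
    Finset.sum_insert (by decide), Finset.sum_singleton]
  abel

def wcoef (ω : Form m 1) (i : Fin m) : MvPolynomial (Fin m) ℂ := ω (fun _ => i)

lemma omega_apply (ω : Form m 1) (g : Fin 1 → Fin m) : ω g = wcoef ω (g 0) :=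
  congrArg ω (funext fun k => by rw [Subsingleton.elim k 0])

def Ncoef (ω : Form m 1) (i j : Fin m) : MvPolynomial (Fin m) ℂ :=
  pderiv i (wcoef ω j) - pderiv j (wcoef ω i)

lemma extd_apply (ω : Form m 1) (f : Fin 2 → Fin m) : extd ω f = Ncoef ω (f 0) (f 1) := by
  show ∑ i : Fin 2, _ = _
  rw [Fin.sum_univ_two]
  have h0 : (f ∘ Fin.succAbove 0) = fun _ : Fin 1 => f 1 := by
    funext k; rw [Subsingleton.elim k 0]; rfl
  have h1 : (f ∘ Fin.succAbove 1) = fun _ : Fin 1 => f 0 := by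
    funext k; rw [Subsingleton.elim k 0]; rfl
  rw [h0, h1]
  show (1 : ℤ) • _ + (-1 : ℤ)^(1:ℕ) • _ = _
  simp [Ncoef, wcoef, sub_eq_add_neg]

end Aux

section Aux2
open Equiv MvPolynomial Finset
variable {m : ℕ}

lemma key3 (ω : Form m 1) (hint : wedge ω (extd ω) = 0) (i j k : Fin m) :
    wcoef ω i * Ncoef ω j k - wcoef ω j * Ncoef ω i k + wcoef ω k * Ncoef ω i j = 0 := by
  have h := congrFun hint ![i, j, k]
  rw [show (0 : Form m (1+2)) ![i,j,k] = 0 from rfl] at h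
  unfold wedge at h
  rw [sum_perm3] at h
  simp only [omega_apply, extd_apply] at h
  have e1 : (Fin.castAdd (1+1) (0:Fin 1)) = (0 : Fin 3) := rfl
  have e2 : (Fin.natAdd 1 (0:Fin 2)) = (1 : Fin 3) := rfl
  have e3 : (Fin.natAdd 1 (1:Fin 2)) = (2 : Fin 3) := rfl
  rw [e1, e2, e3] at h
  norm_num [Equiv.swap_apply_def, Fin.ext_iff] at h
  rw [show (![i, j, k] : Fin 3 → Fin m) 2 = k from rfl] at h
  rw [show Ncoef ω j i = -Ncoef ω i j from by simp only [Ncoef]; ring,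
      show Ncoef ω k j = -Ncoef ω j k from by simp only [Ncoef]; ring,
      show Ncoef ω k i = -Ncoef ω i k from by simp only [Ncoef]; ring] at h
  have h2 := congrArg (fun p => (2:ℂ) • p) h
  simp only [smul_add, smul_neg, smul_smul, smul_zero] at h2
  norm_num at h2
  have hS : wcoef ω i * Ncoef ω j k - wcoef ω j * Ncoef ω i k + wcoef ω k * Ncoef ω i j +
      (wcoef ω i * Ncoef ω j k - wcoef ω j * Ncoef ω i k + wcoef ω k * Ncoef ω i j) = 0 := by
    linear_combination h2
  have h3 : (2:ℂ) • (wcoef ω i * Ncoef ω j k - wcoef ω j * Ncoef ω i k +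
      wcoef ω k * Ncoef ω i j) = 0 := by rw [two_smul]; exact hS
  exact (smul_eq_zero.mp h3).resolve_left two_ne_zero

end Aux2

section Aux3
open Equiv MvPolynomial Finset
variable {m : ℕ}

lemma ctrX_extd_apply (ω : Form m 1) (X : Fin m → MvPolynomial (Fin m) ℂ)
    (u : Fin 1 → Fin m) :
    ctrX X (extd ω) u = ∑ j, X j * Ncoef ω j (u 0) := by
  refine Finset.sum_congr rfl fun j _ => ?_
  rw [extd_apply]
  rfl

lemma extd_const_apply (G : MvPolynomial (Fin m) ℂ) (u : Fin 1 → Fin m) :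
    extd (const G) u = pderiv (u 0) G := by
  show ∑ i : Fin 1, _ = _
  rw [Fin.sum_univ_one]
  show (-1:ℤ)^((0:Fin 1):ℕ) • _ = _
  simp [const]

lemma key_sum (ω : Form m 1) (hint : wedge ω (extd ω) = 0)
    (X : Fin m → MvPolynomial (Fin m) ℂ) (i0 i1 : Fin m) :
    (∑ j, X j * wcoef ω j) * Ncoef ω i0 i1
      = wcoef ω i0 * (∑ j, X j * Ncoef ω j i1) - wcoef ω i1 * (∑ j, X j * Ncoef ω j i0) := by
  rw [Finset.sum_mul, Finset.mul_sum, Finset.mul_sum, ← Finset.sum_sub_distrib]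
  refine Finset.sum_congr rfl fun j _ => ?_
  linear_combination X j * key3 ω hint j i0 i1

end Aux3


/-- for a homogeneous vector field `X` of degree `a − e`
(components of degree `c`, `a + 1 = e + c`), the pair
`(i_X ω, (a·i_X dω + e·d i_X ω)/e)` satisfies the graded unfolding equation in
degree `a`. -/
theorem trivial_unfoldings_from_vector_fields {m a e c : ℕ} (he : 1 ≤ e)
    (hc : a + 1 = e + c)
    (ω : Form m 1) (hω : IsHomog 1 e ω) (hR : ctr ω = 0)
    (hint : wedge ω (extd ω) = 0)
    (X : Fin m → MvPolynomial (Fin m) ℂ) (hX : ∀ i, (X i).IsHomogeneous c) :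
    (a : ℂ) • wedge (const (∑ i, X i * ω (fun _ => i))) (extd ω) =
      (e : ℂ) • wedge ω
        ((((e : ℂ))⁻¹ • ((a : ℂ) • ctrX X (extd ω) +
            (e : ℂ) • extd (const (∑ i, X i * ω (fun _ => i))))) -
          extd (const (∑ i, X i * ω (fun _ => i)))) := by
  have he' : (e:ℂ) ≠ 0 := Nat.cast_ne_zero.mpr (by omega)
  funext f
  simp only [Pi.smul_apply]
  unfold wedge
  rw [sum_perm2, sum_perm2]
  simp only [extd_apply, omega_apply]
  have hσ : ∀ k : Fin m, wcoef (((e:ℂ))⁻¹ • ((a:ℂ) • ctrX X (extd ω) +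
        (e:ℂ) • extd (const (∑ x, X x * wcoef ω x))) -
        extd (const (∑ x, X x * wcoef ω x))) k
      = ((a:ℂ) * (e:ℂ)⁻¹) • ∑ j, X j * Ncoef ω j k := by
    intro k
    simp only [wcoef, Pi.sub_apply, Pi.smul_apply, Pi.add_apply, ctrX_extd_apply,
      extd_const_apply]
    rw [smul_add, smul_smul, smul_smul, inv_mul_cancel₀ he', one_smul, add_sub_cancel_right,
      mul_comm]
  rw [hσ, hσ]
  simp only [const]
  norm_num [Equiv.swap_apply_def, Fin.ext_iff]
  rw [show f (Fin.castAdd 1 0) = f 0 from rfl,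
    show Ncoef ω (f 1) (f 0) = -Ncoef ω (f 0) (f 1) from by simp only [Ncoef]; ring,
    ]
  simp only [mul_neg, smul_neg, neg_neg]
  rw [key_sum ω hint X (f 0) (f 1)]
  have hea : (e:ℂ) * ((a:ℂ) * (e:ℂ)⁻¹) = (a:ℂ) := by field_simp
  rw [smul_smul ((e:ℂ)), smul_smul ((e:ℂ)), hea]
  module
end
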